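/- There exists a constant C > 0 such that for all b ∈ (0,1): |c_0(b,1)| ≤ C b², and for every integer n ≥ 1, 0 ≤ n − c_n(b,1) ≤ b^{2n+2}/(n+1). In particular sup_{n ≥ 0} |c_n(b,1) − n|/(1+n) → 0 as b → 0, i.e. the Dirichlet-to-Neumann maps of the potentials q_b = χ_{(0,b)}(|x|) converge to that of the zero potential (whose eigenvalues are c_n = n) although ‖q_b − 0‖_{L^∞} = 1 for all b. -/

import Mathlib

open Real Set MeasureTheory Filter

/-- Bessel function of the first kind of integer order, via the Poisson integral
representation. -/
noncomputable def besselJ (n : ℕ) (r : ℝ) : ℝ :=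
  r ^ n / (2 ^ n * Real.Gamma ((n : ℝ) + 1 / 2) * Real.sqrt Real.pi) *
    ∫ t in (-1 : ℝ)..1, Real.cos (r * t) * (1 - t ^ 2) ^ ((n : ℝ) - 1 / 2)

/-- The eigenvalues `c_n(b,1)` of the Dirichlet-to-Neumann map for the one-step radial
potential `q = χ_{(0,b)}(|x|)` on the unit disk. -/
noncomputable def cEig (n : ℕ) (b : ℝ) : ℝ :=
  if n = 0 then -(b * besselJ 1 b) / (b * Real.log b * besselJ 1 b + besselJ 0 b)
  else n * (besselJ (n - 1) b - b ^ (2 * n) * besselJ (n + 1) b) /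
    (besselJ (n - 1) b + b ^ (2 * n) * besselJ (n + 1) b)

/-- The one-step radial potential `q(x) = χ_{(0,b)}(|x|)` on the plane. -/
noncomputable def stepPot (b : ℝ) : EuclideanSpace ℝ (Fin 2) → ℝ :=
  Set.indicator (Metric.ball 0 b) fun _ => 1

namespace DtnAux

/-- The Poisson integral. -/
noncomputable def Iint (n : ℕ) (b : ℝ) : ℝ :=
  ∫ t in (-1 : ℝ)..1, Real.cos (b * t) * (1 - t ^ 2) ^ ((n : ℝ) - 1 / 2)

lemma besselJ_eq (n : ℕ) (b : ℝ) :
    besselJ n b = b ^ n / (2 ^ n * Real.Gamma ((n : ℝ) + 1 / 2) * Real.sqrt Real.pi) *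
      Iint n b := rfl

lemma exp_ne_zero (n : ℕ) : ((n : ℝ) - 1 / 2) ≠ 0 := by
  intro h
  rcases Nat.eq_zero_or_pos n with h0 | h0
  · rw [h0] at h; norm_num at h
  · have : (1 : ℝ) ≤ n := by exact_mod_cast h0
    linarith

lemma integrable_aux (b m : ℝ) (hm : -(1/2 : ℝ) ≤ m) (hm0 : m ≠ 0) :
    IntervalIntegrable (fun t : ℝ => Real.cos (b * t) * (1 - t ^ 2) ^ m) volume (-1) 1 := by
  have h1 : IntervalIntegrable (fun x : ℝ => x ^ (-(1/2) : ℝ)) volume 0 2 :=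
    intervalIntegral.intervalIntegrable_rpow' (by norm_num)
  have h2 : IntervalIntegrable (fun t : ℝ => (1 - t) ^ (-(1/2) : ℝ)) volume (-1) 1 := by
    have := (h1.comp_sub_left 1).symm
    norm_num at this
    exact this
  have h3 : IntervalIntegrable (fun t : ℝ => (1 + t) ^ (-(1/2) : ℝ)) volume (-1) 1 := by
    have := h1.comp_add_right 1
    norm_num at this
    simpa [add_comm] using this
  refine (h2.add h3).mono_fun ?_ ?_
  · apply Measurable.aestronglyMeasurable
    exact (Real.measurable_cos.comp (measurable_const.mul measurable_id)).mul
      ((measurable_const.sub (measurable_id.pow measurable_const)).pow measurable_const)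
  · rw [Filter.EventuallyLE, ae_restrict_iff' measurableSet_uIoc]
    refine Filter.Eventually.of_forall fun t ht => ?_
    rw [uIoc_of_le (by norm_num : (-1:ℝ) ≤ 1)] at ht
    obtain ⟨ht1, ht2⟩ := ht
    have hx : 0 ≤ 1 - t ^ 2 := by nlinarith
    have key : (1 - t ^ 2) ^ m ≤ (1 - t) ^ (-(1/2) : ℝ) + (1 + t) ^ (-(1/2) : ℝ) := by
      rcases eq_or_lt_of_le hx with h0 | h0
      · rw [← h0, Real.zero_rpow hm0]
        have h1t : (0:ℝ) ≤ 1 - t := by nlinarith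
        exact add_nonneg (Real.rpow_nonneg h1t _) (Real.rpow_nonneg (by nlinarith) _)
      · have hcomp : (1 - t ^ 2) ^ m ≤ (1 - t ^ 2) ^ (-(1/2) : ℝ) :=
          Real.rpow_le_rpow_of_exponent_ge h0 (by nlinarith) hm
        refine hcomp.trans ?_
        rcases le_or_gt 0 t with hts | hts
        · have hpos : 0 < 1 - t := by nlinarith
          have hle : 1 - t ≤ 1 - t ^ 2 := by nlinarith
          have := Real.rpow_le_rpow_of_nonpos hpos hle (by norm_num : (-(1/2):ℝ) ≤ 0)
          have hnn : (0:ℝ) ≤ (1 + t) ^ (-(1/2) : ℝ) := Real.rpow_nonneg (by linarith) _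
          linarith
        · have hpos : 0 < 1 + t := by linarith
          have hle : 1 + t ≤ 1 - t ^ 2 := by nlinarith
          have := Real.rpow_le_rpow_of_nonpos hpos hle (by norm_num : (-(1/2):ℝ) ≤ 0)
          have hnn : (0:ℝ) ≤ (1 - t) ^ (-(1/2) : ℝ) := Real.rpow_nonneg (by nlinarith) _
          linarith
    have hnn2 : (0:ℝ) ≤ (1 - t ^ 2) ^ m := Real.rpow_nonneg hx _
    calc ‖Real.cos (b * t) * (1 - t ^ 2) ^ m‖
        = |Real.cos (b * t)| * |(1 - t ^ 2) ^ m| := by rw [norm_mul]; rfl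
      _ ≤ 1 * (1 - t ^ 2) ^ m := by
          rw [abs_of_nonneg hnn2]
          exact mul_le_mul_of_nonneg_right (Real.abs_cos_le_one _) hnn2
      _ ≤ ‖(1 - t) ^ (-(1/2) : ℝ) + (1 + t) ^ (-(1/2) : ℝ)‖ := by
          rw [one_mul]
          refine key.trans (le_abs_self _)
    
lemma integrable (n : ℕ) (b : ℝ) :
    IntervalIntegrable (fun t : ℝ => Real.cos (b * t) * (1 - t ^ 2) ^ ((n : ℝ) - 1 / 2))
      volume (-1) 1 := by
  refine integrable_aux b _ ?_ (exp_ne_zero n)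
  have : (0:ℝ) ≤ n := Nat.cast_nonneg n
  linarith

lemma Iint_pos (n : ℕ) {b : ℝ} (hb0 : 0 < b) (hb1 : b ≤ 1) : 0 < Iint n b := by
  refine intervalIntegral.intervalIntegral_pos_of_pos_on (integrable n b) (fun t ht => ?_) (by norm_num)
  have hx : 0 < 1 - t ^ 2 := by nlinarith [ht.1, ht.2]
  have hcos : 0 < Real.cos (b * t) := by
    apply Real.cos_pos_of_mem_Ioo
    constructor
    · nlinarith [Real.pi_gt_three, ht.1, ht.2, abs_nonneg t]
    · nlinarith [Real.pi_gt_three, ht.1, ht.2]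
  exact mul_pos hcos (Real.rpow_pos_of_pos hx _)

lemma besselJ_pos (n : ℕ) {b : ℝ} (hb0 : 0 < b) (hb1 : b ≤ 1) : 0 < besselJ n b := by
  rw [besselJ_eq]
  refine mul_pos (div_pos (pow_pos hb0 n) ?_) (Iint_pos n hb0 hb1)
  exact mul_pos (mul_pos (pow_pos two_pos n)
    (Real.Gamma_pos_of_pos (by positivity))) (Real.sqrt_pos.mpr Real.pi_pos)

lemma cos_nonneg_aux {b t : ℝ} (hb0 : 0 ≤ b) (hb1 : b ≤ 1) (ht : t ∈ Icc (-1:ℝ) 1) :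
    0 ≤ Real.cos (b * t) := by
  apply Real.cos_nonneg_of_mem_Icc
  constructor
  · nlinarith [Real.pi_gt_three, ht.1, ht.2]
  · nlinarith [Real.pi_gt_three, ht.1, ht.2]

lemma Iint_mono (n : ℕ) {b : ℝ} (hb0 : 0 ≤ b) (hb1 : b ≤ 1) :
    Iint (n + 2) b ≤ Iint n b := by
  refine intervalIntegral.integral_mono_on (by norm_num)
    (integrable (n+2) b) (integrable n b) (fun t ht => ?_)
  have hx : 0 ≤ 1 - t ^ 2 := by nlinarith [ht.1, ht.2]
  have hcos := cos_nonneg_aux hb0 hb1 ht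
  rcases eq_or_lt_of_le hx with h0 | h0
  · rw [← h0, Real.zero_rpow (exp_ne_zero (n+2)), Real.zero_rpow (exp_ne_zero n)]
  · refine mul_le_mul_of_nonneg_left ?_ hcos
    refine Real.rpow_le_rpow_of_exponent_ge h0 (by nlinarith) ?_
    push_cast
    linarith

lemma Iint_zero_ge {b : ℝ} (hb0 : 0 < b) (hb1 : b ≤ 1) : 2 ≤ Iint 0 b := by
  have h2 : (2:ℝ) = ∫ t in (-1:ℝ)..1, (1:ℝ) := by norm_num
  refine le_trans (le_of_eq h2) ?_
  refine intervalIntegral.integral_mono_ae_restrict (by norm_num)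
    intervalIntegrable_const (integrable 0 b) ?_
  rw [← Measure.restrict_congr_set Ioo_ae_eq_Icc, Filter.EventuallyLE,
    ae_restrict_iff' measurableSet_Ioo]
  refine Filter.Eventually.of_forall fun t ht => ?_
  have hx : 0 < 1 - t ^ 2 := by nlinarith [ht.1, ht.2]
  have h1 : Real.sqrt (1 - t ^ 2) ≤ 1 - t ^ 2 / 2 := by
    have := Real.sqrt_le_sqrt (show 1 - t^2 ≤ (1 - t^2/2)^2 by nlinarith)
    rwa [Real.sqrt_sq (by nlinarith)] at this
  have h2' : 1 - t ^ 2 / 2 ≤ Real.cos (b * t) := by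
    have hc := Real.one_sub_sq_div_two_le_cos (x := b * t)
    have hb2 : b ^ 2 ≤ 1 := by nlinarith
    have hbt : (b * t) ^ 2 ≤ t ^ 2 := by
      rw [mul_pow]
      nlinarith [sq_nonneg t]
    linarith
  have hrp : (0:ℝ) < (1 - t ^ 2) ^ (((0:ℕ):ℝ) - 1/2) := Real.rpow_pos_of_pos hx _
  have key : Real.sqrt (1 - t ^ 2) * (1 - t ^ 2) ^ (((0:ℕ):ℝ) - 1/2) = 1 := by
    rw [Real.sqrt_eq_rpow, ← Real.rpow_add hx]
    norm_num
  calc (1:ℝ) = Real.sqrt (1 - t ^ 2) * (1 - t ^ 2) ^ (((0:ℕ):ℝ) - 1/2) := key.symm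
    _ ≤ Real.cos (b * t) * (1 - t ^ 2) ^ (((0:ℕ):ℝ) - 1/2) := by
        refine mul_le_mul_of_nonneg_right ?_ hrp.le
        calc Real.sqrt (1 - t ^ 2) ≤ 1 - t ^ 2 / 2 := h1
          _ ≤ Real.cos (b * t) := h2'

lemma Iint_two_le {b : ℝ} (hb0 : 0 ≤ b) (hb1 : b ≤ 1) : Iint 2 b ≤ 4 / 3 := by
  have h2 : ∫ t in (-1:ℝ)..1, (1 - t ^ 2) = 4 / 3 := by
    rw [intervalIntegral.integral_sub intervalIntegrable_const
      (intervalIntegral.intervalIntegrable_pow 2), integral_pow]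
    norm_num
  rw [← h2]
  refine intervalIntegral.integral_mono_on (by norm_num)
    (integrable 2 b) ?_ (fun t ht => ?_)
  · exact (continuous_const.sub (continuous_pow 2)).intervalIntegrable _ _
  have hx : 0 ≤ 1 - t ^ 2 := by nlinarith [ht.1, ht.2]
  have hstep : (1 - t ^ 2) ^ (((2:ℕ):ℝ) - 1/2) ≤ 1 - t ^ 2 := by
    rcases eq_or_lt_of_le hx with h0 | h0
    · rw [← h0, Real.zero_rpow (exp_ne_zero 2)]
    · have := Real.rpow_le_rpow_of_exponent_ge h0 (by nlinarith)
        (show (1:ℝ) ≤ ((2:ℕ):ℝ) - 1/2 by norm_num)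
      rwa [Real.rpow_one] at this
  calc Real.cos (b * t) * (1 - t ^ 2) ^ (((2:ℕ):ℝ) - 1/2)
      ≤ 1 * (1 - t ^ 2) ^ (((2:ℕ):ℝ) - 1/2) :=
        mul_le_mul_of_nonneg_right (Real.cos_le_one _) (Real.rpow_nonneg hx _)
    _ = (1 - t ^ 2) ^ (((2:ℕ):ℝ) - 1/2) := one_mul _
    _ ≤ 1 - t ^ 2 := hstep

lemma Iint_one_le {b : ℝ} : Iint 1 b ≤ π / 2 := by
  rw [← integral_sqrt_one_sub_sq]
  refine intervalIntegral.integral_mono_on (by norm_num)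
    (integrable 1 b) ?_ (fun t ht => ?_)
  · exact (continuous_const.sub (continuous_pow 2)).sqrt.intervalIntegrable _ _
  have hx : 0 ≤ 1 - t ^ 2 := by nlinarith [ht.1, ht.2]
  calc Real.cos (b * t) * (1 - t ^ 2) ^ (((1:ℕ):ℝ) - 1/2)
      ≤ 1 * (1 - t ^ 2) ^ (((1:ℕ):ℝ) - 1/2) :=
        mul_le_mul_of_nonneg_right (Real.cos_le_one _) (Real.rpow_nonneg hx _)
    _ = (1 - t ^ 2) ^ ((1:ℝ)/2) := by norm_num
    _ = Real.sqrt (1 - t ^ 2) := by rw [Real.sqrt_eq_rpow]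

lemma besselJ_zero_eq (b : ℝ) : besselJ 0 b = Iint 0 b / π := by
  rw [besselJ_eq]
  have : ((0:ℕ):ℝ) + 1/2 = 1/2 := by norm_num
  rw [this, Real.Gamma_one_half_eq]
  rw [pow_zero, pow_zero, one_mul, Real.mul_self_sqrt Real.pi_pos.le]
  ring

lemma besselJ_one_eq (b : ℝ) : besselJ 1 b = b / π * Iint 1 b := by
  rw [besselJ_eq]
  have h1 : ((1:ℕ):ℝ) + 1/2 = 1/2 + 1 := by norm_num
  rw [h1, Real.Gamma_add_one (by norm_num), Real.Gamma_one_half_eq]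
  rw [pow_one, pow_one]
  have hπ : Real.sqrt π * Real.sqrt π = π := Real.mul_self_sqrt Real.pi_pos.le
  rw [show (2:ℝ) * (1 / 2 * Real.sqrt π) * Real.sqrt π
      = Real.sqrt π * Real.sqrt π by ring, hπ]

/-- The key comparison inequality. -/
lemma key (m : ℕ) {b : ℝ} (hb0 : 0 < b) (hb1 : b ≤ 1) :
    2 * ((m:ℝ) + 1) * ((m:ℝ) + 2) * besselJ (m + 2) b ≤ b ^ 2 * besselJ m b := by
  set y : ℝ := (m:ℝ) + 1/2 with hy
  have hy0 : 0 < y := by positivity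
  have hG : 0 < Real.Gamma y := Real.Gamma_pos_of_pos hy0
  have hGam : Real.Gamma (((m + 2:ℕ):ℝ) + 1/2) = (y + 1) * (y * Real.Gamma y) := by
    have hc : ((m + 2:ℕ):ℝ) + 1/2 = (y + 1) + 1 := by push_cast; ring
    rw [hc, Real.Gamma_add_one (by positivity)]
    congr 1
    rw [Real.Gamma_add_one hy0.ne']
  have hIm := Iint_pos m hb0 hb1
  have hI2 : 0 < Iint (m + 2) b := Iint_pos (m + 2) hb0 hb1
  have hImono := Iint_mono m hb0.le hb1
  have hI : 2 * ((m:ℝ) + 1) * ((m:ℝ) + 2) * Iint (m + 2) b ≤ 4 * (y + 1) * y * Iint m b := by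
    rcases Nat.eq_zero_or_pos m with h0 | h0
    · subst h0
      have h1 := Iint_two_le hb0.le hb1
      have h2 := Iint_zero_ge hb0 hb1
      have hy' : y = 1/2 := by rw [hy]; norm_num
      rw [hy']
      have : Iint (0 + 2) b = Iint 2 b := by norm_num
      rw [this]
      nlinarith
    · have hm1 : (1:ℝ) ≤ m := by exact_mod_cast h0
      have hco : 2 * ((m:ℝ) + 1) * ((m:ℝ) + 2) ≤ 4 * (y + 1) * y := by
        rw [hy]; nlinarith
      have hconn : (0:ℝ) ≤ 2 * ((m:ℝ) + 1) * ((m:ℝ) + 2) := by positivity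
      nlinarith [mul_le_mul_of_nonneg_left hImono hconn,
        mul_le_mul_of_nonneg_right hco hIm.le]
  have e2 : besselJ (m + 2) b =
      (b ^ (m + 2) * Iint (m + 2) b) / (2 ^ (m + 2) * ((y + 1) * (y * Real.Gamma y)) *
        Real.sqrt π) := by
    rw [besselJ_eq, hGam]; ring
  have e0 : besselJ m b = (b ^ m * Iint m b) / (2 ^ m * Real.Gamma y * Real.sqrt π) := by
    rw [besselJ_eq, hy]; ring
  rw [e2, e0, mul_div_assoc', mul_div_assoc', div_le_div_iff₀ (by positivity) (by positivity)]
  have hK : (0:ℝ) ≤ b ^ (m + 2) * 2 ^ m * Real.Gamma y * Real.sqrt π := by positivity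
  calc 2 * ((m:ℝ) + 1) * ((m:ℝ) + 2) * (b ^ (m + 2) * Iint (m + 2) b) *
        (2 ^ m * Real.Gamma y * Real.sqrt π)
      = (2 * ((m:ℝ) + 1) * ((m:ℝ) + 2) * Iint (m + 2) b) *
        (b ^ (m + 2) * 2 ^ m * Real.Gamma y * Real.sqrt π) := by ring
    _ ≤ (4 * (y + 1) * y * Iint m b) *
        (b ^ (m + 2) * 2 ^ m * Real.Gamma y * Real.sqrt π) :=
        mul_le_mul_of_nonneg_right hI hK
    _ = b ^ 2 * (b ^ m * Iint m b) *
        (2 ^ (m + 2) * ((y + 1) * (y * Real.Gamma y)) * Real.sqrt π) := by ring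

/-- The bound for `n ≥ 1`. -/
lemma part2 {b : ℝ} (hb : b ∈ Set.Ioo (0:ℝ) 1) (n : ℕ) (hn : 1 ≤ n) :
    0 ≤ (n : ℝ) - cEig n b ∧ (n : ℝ) - cEig n b ≤ b ^ (2 * n + 2) / (n + 1) := by
  obtain ⟨hb0, hb1⟩ := hb
  obtain ⟨m, rfl⟩ : ∃ m, n = m + 1 := ⟨n - 1, (Nat.succ_pred_eq_of_pos hn).symm⟩
  have hA : 0 < besselJ m b := besselJ_pos m hb0 hb1.le
  have hJ2 : 0 < besselJ (m + 2) b := besselJ_pos (m + 2) hb0 hb1.le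
  set A : ℝ := besselJ m b
  set X : ℝ := b ^ (2 * (m + 1)) * besselJ (m + 2) b with hX
  have hXpos : 0 < X := mul_pos (pow_pos hb0 _) hJ2
  have hD : 0 < A + X := by linarith
  have hceq : cEig (m + 1) b = (↑(m + 1) : ℝ) * (A - X) / (A + X) := by
    simp only [cEig, Nat.add_sub_cancel, if_neg (Nat.succ_ne_zero m)]
    rfl
  have hform : (↑(m + 1) : ℝ) - cEig (m + 1) b = (↑(m + 1) : ℝ) * (2 * X) / (A + X) := by
    rw [hceq]
    field_simp
    ring
  constructor
  · rw [hform]; positivity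
  · rw [hform, div_le_div_iff₀ hD (by positivity)]
    have hkey := key m hb0 hb1.le
    have h1 : (↑(m + 1) : ℝ) * (2 * X) * (↑(m + 1) + 1) =
        (2 * ((m:ℝ) + 1) * ((m:ℝ) + 2) * besselJ (m + 2) b) * b ^ (2 * (m + 1)) := by
      rw [hX]; push_cast; ring
    have h2 : (2 * ((m:ℝ) + 1) * ((m:ℝ) + 2) * besselJ (m + 2) b) * b ^ (2 * (m + 1)) ≤
        (b ^ 2 * A) * b ^ (2 * (m + 1)) :=
      mul_le_mul_of_nonneg_right hkey (pow_nonneg hb0.le _)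
    have h3 : (b ^ 2 * A) * b ^ (2 * (m + 1)) = b ^ (2 * (m + 1) + 2) * A := by ring
    have h4 : b ^ (2 * (m + 1) + 2) * A ≤ b ^ (2 * (m + 1) + 2) * (A + X) := by
      have := pow_nonneg hb0.le (2 * (m + 1) + 2)
      nlinarith
    linarith [h1 ▸ (h2.trans_eq h3), h4]

/-- The bound for `n = 0`. -/
lemma part1 {b : ℝ} (hb : b ∈ Set.Ioo (0:ℝ) 1) : |cEig 0 b| ≤ 4 * b ^ 2 := by
  obtain ⟨hb0, hb1⟩ := hb
  have hπ := Real.pi_pos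
  have hJ1pos : 0 < besselJ 1 b := besselJ_pos 1 hb0 hb1.le
  have hJ1 : besselJ 1 b ≤ b / 2 := by
    rw [besselJ_one_eq]
    calc b / π * Iint 1 b ≤ b / π * (π / 2) :=
          mul_le_mul_of_nonneg_left Iint_one_le (by positivity)
      _ = b / 2 := by field_simp
  have hJ0 : 2 / π ≤ besselJ 0 b := by
    rw [besselJ_zero_eq]
    exact div_le_div_of_nonneg_right (Iint_zero_ge hb0 hb1.le) hπ.le
  have hlog : |Real.log b * b| < 1 := Real.abs_log_mul_self_lt b hb0 hb1.le
  have h2pi : 2 / π ≥ 5 / 8 := by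
    rw [ge_iff_le, div_le_div_iff₀ (by norm_num) hπ]
    nlinarith [Real.pi_lt_d2]
  have hnum : b * Real.log b * besselJ 1 b ≥ -(1 / 2) := by
    have habs : |b * Real.log b| < 1 := by rwa [mul_comm] at hlog
    have h1 : b * Real.log b ≥ -1 := by
      have := abs_lt.mp habs
      linarith [this.1]
    have h2 : besselJ 1 b ≤ 1 / 2 := by linarith
    nlinarith [abs_lt.mp habs, hJ1pos]
  have hD : 1 / 8 ≤ b * Real.log b * besselJ 1 b + besselJ 0 b := by
    have : besselJ 0 b ≥ 5 / 8 := le_trans h2pi hJ0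
    linarith
  have hDpos : 0 < b * Real.log b * besselJ 1 b + besselJ 0 b := by linarith
  have hceq : cEig 0 b = -(b * besselJ 1 b) /
      (b * Real.log b * besselJ 1 b + besselJ 0 b) := by simp [cEig]
  rw [hceq, abs_div, abs_of_pos hDpos, abs_neg, abs_of_pos (mul_pos hb0 hJ1pos)]
  calc b * besselJ 1 b / (b * Real.log b * besselJ 1 b + besselJ 0 b)
      ≤ (b * (b / 2)) / (1 / 8) := by
        apply div_le_div₀ (by positivity) ?_ (by norm_num) hD
        exact mul_le_mul_of_nonneg_left hJ1 hb0.le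
    _ = 4 * b ^ 2 := by ring

lemma term_nonneg (n : ℕ) (b : ℝ) : 0 ≤ |cEig n b - n| / (1 + n) := by positivity

lemma term_le {b : ℝ} (hb : b ∈ Set.Ioo (0:ℝ) 1) (n : ℕ) :
    |cEig n b - n| / (1 + n) ≤ 4 * b ^ 2 := by
  obtain ⟨hb0, hb1⟩ := hb
  rcases Nat.eq_zero_or_pos n with h0 | h0
  · subst h0
    simpa using (part1 ⟨hb0, hb1⟩).trans (le_refl _)
  · obtain ⟨hge, hle⟩ := part2 ⟨hb0, hb1⟩ n h0
    have habs : |cEig n b - n| = (n : ℝ) - cEig n b := by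
      rw [abs_sub_comm, abs_of_nonneg hge]
    rw [habs]
    have hcast : (0:ℝ) ≤ (n:ℝ) := Nat.cast_nonneg n
    have h1 : ((n : ℝ) - cEig n b) / (1 + n) ≤ (n : ℝ) - cEig n b :=
      div_le_self hge (by linarith)
    have h2 : b ^ (2 * n + 2) / ((n : ℝ) + 1) ≤ b ^ (2 * n + 2) :=
      div_le_self (by positivity) (by linarith)
    have h3 : b ^ (2 * n + 2) ≤ b ^ 2 :=
      pow_le_pow_of_le_one hb0.le hb1.le (by omega)
    nlinarith [sq_nonneg b]

end DtnAux

theorem dtn_converges_to_free_eigenvalues :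
    (∃ C > 0, ∀ b ∈ Set.Ioo (0 : ℝ) 1, |cEig 0 b| ≤ C * b ^ 2) ∧
    (∀ b ∈ Set.Ioo (0 : ℝ) 1, ∀ n : ℕ, 1 ≤ n →
        0 ≤ (n : ℝ) - cEig n b ∧ (n : ℝ) - cEig n b ≤ b ^ (2 * n + 2) / (n + 1)) ∧
    Filter.Tendsto (fun b : ℝ => ⨆ n : ℕ, |cEig n b - n| / (1 + n))
      (nhdsWithin 0 (Set.Ioo (0 : ℝ) 1)) (nhds 0) ∧
    ∀ b ∈ Set.Ioo (0 : ℝ) 1, eLpNorm (stepPot b - 0) ⊤ volume = 1 := by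
  refine ⟨⟨4, by norm_num, fun b hb => DtnAux.part1 hb⟩,
    fun b hb n hn => DtnAux.part2 hb n hn, ?_, ?_⟩
  · -- tendsto
    apply squeeze_zero' (g := fun b : ℝ => 4 * b ^ 2)
    · filter_upwards [eventually_mem_nhdsWithin] with b _
      exact Real.iSup_nonneg fun n => DtnAux.term_nonneg n b
    · filter_upwards [eventually_mem_nhdsWithin] with b hb
      exact ciSup_le fun n => DtnAux.term_le hb n
    · have hcont : Continuous fun b : ℝ => 4 * b ^ 2 := by continuity
      have h0 := hcont.tendsto 0
      norm_num at h0
      exact h0.mono_left nhdsWithin_le_nhds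
  · intro b hb
    rw [sub_zero]
    unfold stepPot
    rw [eLpNorm_indicator_const' measurableSet_ball
      (Metric.measure_ball_pos volume _ hb.1).ne' (by simp)]
    simp
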